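/- arXiv:2101.10510 — 4 statements merged into one kernel-verified Lean document; each statement's English description precedes it below -/
import Mathlib

section
/- Let γ < 1 with γ ≠ 0, let μ ∈ ℝⁿ, let Σ be an n×n symmetric positive semidefinite real matrix, and let Θ ⊆ ℝⁿ be nonempty. Suppose the Markowitz objective f(θ) = μᵀθ + ((γ−1)/2)·θᵀΣθ is bounded above on Θ with supremum r_ce = sup_{θ∈Θ} f(θ). Then for every a > 0 and w > 0, the supremum over all c > 0 and θ ∈ Θ of the quantity c^γ/γ + a·w^{γ−1}·(μᵀθ·w − c) + (1/2)·a·(γ−1)·w^{γ−2}·(θᵀΣθ)·w² equals w^γ·( ((1−γ)/γ)·a^{γ/(γ−1)} + a·r_ce ). -/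
open Matrix

/-- Core scalar inequality: for `γ < 1`, `γ ≠ 0`, `t > 0`, `t^γ/γ - t ≤ 1/γ - 1`. -/
lemma hjb_core_ineq (γ : ℝ) (hγ : γ < 1) (hγ0 : γ ≠ 0) {t : ℝ} (ht : 0 < t) :
    t ^ γ / γ ≤ 1 / γ - 1 + t := by
  rcases lt_or_gt_of_ne hγ0 with hneg | hpos
  · -- γ < 0 : weighted AM-GM with weights 1/(1-γ) and 1 - 1/(1-γ)
    have h1γ : (0:ℝ) < 1 - γ := by linarith
    have hw2 : (0:ℝ) ≤ 1 - 1/(1-γ) := by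
      rw [sub_nonneg, div_le_one h1γ]; linarith
    have hx : (0:ℝ) ≤ t ^ γ := (Real.rpow_pos_of_pos ht γ).le
    have amgm := Real.geom_mean_le_arith_mean2_weighted
      (by positivity : (0:ℝ) ≤ 1/(1-γ)) hw2 hx ht.le
      (by ring : 1/(1-γ) + (1 - 1/(1-γ)) = 1)
    rw [← Real.rpow_mul ht.le, ← Real.rpow_add ht,
      show γ * (1/(1-γ)) + (1 - 1/(1-γ)) = 0 by field_simp; ring,
      Real.rpow_zero] at amgm
    have h2 := mul_le_mul_of_nonneg_left amgm h1γ.le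
    have h3 : (1-γ) * (1/(1-γ) * t ^ γ + (1 - 1/(1-γ)) * t) = t ^ γ - γ * t := by
      field_simp; ring
    rw [div_le_iff_of_neg hneg]
    have h4 : (1/γ - 1 + t) * γ = 1 - γ + γ * t := by field_simp
    linarith
  · -- 0 < γ < 1
    have h1γ : (0:ℝ) ≤ 1 - γ := by linarith
    have amgm := Real.geom_mean_le_arith_mean2_weighted
      hpos.le h1γ ht.le zero_le_one (by ring : γ + (1 - γ) = 1)
    rw [Real.one_rpow, mul_one] at amgm
    rw [div_le_iff₀ hpos]
    have h4 : (1/γ - 1 + t) * γ = 1 - γ + γ * t := by field_simp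
    linarith

/-- Upper bound for `c ↦ c^γ/γ - l·c` on `c > 0`. -/
lemma hjb_g_le (γ : ℝ) (hγ : γ < 1) (hγ0 : γ ≠ 0) {l c : ℝ} (hl : 0 < l) (hc : 0 < c) :
    c ^ γ / γ - l * c ≤ (1/γ - 1) * l ^ (γ/(γ-1)) := by
  have hγ1 : γ - 1 ≠ 0 := by intro h; exact absurd (by linarith : γ = 1) (ne_of_lt hγ)
  set k := l ^ (1/(γ-1)) with hk_def
  have hk : 0 < k := Real.rpow_pos_of_pos hl _
  have ht : 0 < c / k := div_pos hc hk
  have hcore := hjb_core_ineq γ hγ hγ0 ht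
  have hL : 0 < l ^ (γ/(γ-1)) := Real.rpow_pos_of_pos hl _
  have hkk : k ^ γ = l ^ (γ/(γ-1)) := by
    rw [hk_def, ← Real.rpow_mul hl.le]
    congr 1; field_simp
  have hlk : l * k = l ^ (γ/(γ-1)) := by
    rw [show γ/(γ-1) = 1 + 1/(γ-1) by field_simp; ring, Real.rpow_add hl, Real.rpow_one]
  have e1 : c ^ γ = l ^ (γ/(γ-1)) * (c/k) ^ γ := by
    rw [← hkk, ← Real.mul_rpow hk.le ht.le, mul_div_cancel₀ c hk.ne']
  have e2 : l * c = l ^ (γ/(γ-1)) * (c/k) := by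
    rw [← hlk]; field_simp
  rw [e1, e2]
  have h2 := mul_le_mul_of_nonneg_left hcore hL.le
  have hrw : l ^ (γ/(γ-1)) * (c/k) ^ γ / γ = l ^ (γ/(γ-1)) * ((c/k) ^ γ / γ) := by ring
  rw [hrw]
  nlinarith [h2]

/-- The bound is attained at `c = l^(1/(γ-1))`. -/
lemma hjb_g_eq (γ : ℝ) (hγ : γ < 1) (hγ0 : γ ≠ 0) {l : ℝ} (hl : 0 < l) :
    (l ^ (1/(γ-1))) ^ γ / γ - l * l ^ (1/(γ-1)) = (1/γ - 1) * l ^ (γ/(γ-1)) := by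
  have hγ1 : γ - 1 ≠ 0 := by intro h; exact absurd (by linarith : γ = 1) (ne_of_lt hγ)
  have hkk : (l ^ (1/(γ-1))) ^ γ = l ^ (γ/(γ-1)) := by
    rw [← Real.rpow_mul hl.le]; congr 1; field_simp
  have hlk : l * l ^ (1/(γ-1)) = l ^ (γ/(γ-1)) := by
    rw [show γ/(γ-1) = 1 + 1/(γ-1) by field_simp; ring, Real.rpow_add hl, Real.rpow_one]
  rw [hkk, hlk]; ring

/-- With `r_ce = sup_{θ∈Θ} (μᵀθ + ((γ-1)/2)·θᵀΣθ)` finite, for any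
`a > 0`, `w > 0`, the supremum over `c > 0`, `θ ∈ Θ` of the HJB right-hand side
`c^γ/γ + a·w^(γ-1)·(μᵀθ·w - c) + (1/2)·a·(γ-1)·w^(γ-2)·(θᵀΣθ)·w²`
equals `w^γ·(((1-γ)/γ)·a^(γ/(γ-1)) + a·r_ce)`. -/
theorem hjb_rhs_sup (n : ℕ) (γ : ℝ) (hγ : γ < 1) (hγ0 : γ ≠ 0)
    (μ : Fin n → ℝ) (S : Matrix (Fin n) (Fin n) ℝ)
    (hsymm : S.IsSymm) (hpsd : S.PosSemidef)
    (Θ : Set (Fin n → ℝ)) (hne : Θ.Nonempty)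
    (hbdd : BddAbove ((fun θ => μ ⬝ᵥ θ + (γ - 1) / 2 * (θ ⬝ᵥ (S *ᵥ θ))) '' Θ))
    (r_ce : ℝ)
    (hr : r_ce = sSup ((fun θ => μ ⬝ᵥ θ + (γ - 1) / 2 * (θ ⬝ᵥ (S *ᵥ θ))) '' Θ))
    (a w : ℝ) (ha : 0 < a) (hw : 0 < w) :
    sSup {v : ℝ | ∃ c > (0 : ℝ), ∃ θ ∈ Θ,
        v = c ^ γ / γ + a * w ^ (γ - 1) * ((μ ⬝ᵥ θ) * w - c)
            + 1 / 2 * a * (γ - 1) * w ^ (γ - 2) * (θ ⬝ᵥ (S *ᵥ θ)) * w ^ 2}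
      = w ^ γ * ((1 - γ) / γ * a ^ (γ / (γ - 1)) + a * r_ce) := by
  have hγ1 : γ - 1 ≠ 0 := by intro h; exact absurd (by linarith : γ = 1) (ne_of_lt hγ)
  set l := a * w ^ (γ - 1) with hl_def
  have hl : 0 < l := mul_pos ha (Real.rpow_pos_of_pos hw _)
  have hwγ : 0 < w ^ γ := Real.rpow_pos_of_pos hw γ
  have hP : 0 < a * w ^ γ := mul_pos ha hwγ
  -- scaling identity for the exponent
  have hC : l ^ (γ/(γ-1)) = a ^ (γ/(γ-1)) * w ^ γ := by
    rw [hl_def, Real.mul_rpow ha.le (Real.rpow_pos_of_pos hw _).le,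
      ← Real.rpow_mul hw.le]
    congr 2; field_simp
  -- the target in a convenient form
  have hM : (1/γ - 1) * l ^ (γ/(γ-1)) + a * w ^ γ * r_ce
      = w ^ γ * ((1 - γ) / γ * a ^ (γ / (γ - 1)) + a * r_ce) := by
    rw [hC, show (1:ℝ)/γ - 1 = (1-γ)/γ by field_simp]; ring
  -- rewrite every element of the set
  have hval : ∀ (c : ℝ) (θ : Fin n → ℝ),
      c ^ γ / γ + a * w ^ (γ - 1) * ((μ ⬝ᵥ θ) * w - c)
        + 1 / 2 * a * (γ - 1) * w ^ (γ - 2) * (θ ⬝ᵥ (S *ᵥ θ)) * w ^ 2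
      = (c ^ γ / γ - l * c)
        + a * w ^ γ * (μ ⬝ᵥ θ + (γ - 1) / 2 * (θ ⬝ᵥ (S *ᵥ θ))) := by
    intro c θ
    have h1 : w ^ (γ - 1) * w = w ^ γ := by
      rw [Real.rpow_sub hw, Real.rpow_one]; field_simp
    have h2 : w ^ (γ - 2) * w ^ (2:ℕ) = w ^ γ := by
      rw [Real.rpow_sub hw, show (2:ℝ) = ((2:ℕ):ℝ) by norm_num, Real.rpow_natCast]
      field_simp
    rw [hl_def]
    linear_combination (a * (μ ⬝ᵥ θ)) * h1
      + (1/2 * a * (γ - 1) * (θ ⬝ᵥ (S *ᵥ θ))) * h2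
  set k := l ^ (1/(γ-1)) with hk_def
  have hk : 0 < k := Real.rpow_pos_of_pos hl _
  set T := (1/γ - 1) * l ^ (γ/(γ-1)) + a * w ^ γ * r_ce with hT_def
  have hlub : IsLUB {v : ℝ | ∃ c > (0 : ℝ), ∃ θ ∈ Θ,
      v = c ^ γ / γ + a * w ^ (γ - 1) * ((μ ⬝ᵥ θ) * w - c)
          + 1 / 2 * a * (γ - 1) * w ^ (γ - 2) * (θ ⬝ᵥ (S *ᵥ θ)) * w ^ 2} T := by
    constructor
    · rintro v ⟨c, hc, θ, hθ, rfl⟩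
      rw [hval c θ]
      have hF : μ ⬝ᵥ θ + (γ - 1) / 2 * (θ ⬝ᵥ (S *ᵥ θ)) ≤ r_ce :=
        hr ▸ le_csSup hbdd ⟨θ, hθ, rfl⟩
      have hg := hjb_g_le γ hγ hγ0 hl hc
      have h5 := mul_le_mul_of_nonneg_left hF hP.le
      rw [hT_def]; linarith
    · intro b hb
      have hbθ : ∀ θ ∈ Θ,
          a * w ^ γ * (μ ⬝ᵥ θ + (γ - 1) / 2 * (θ ⬝ᵥ (S *ᵥ θ)))
            ≤ b - (1/γ - 1) * l ^ (γ/(γ-1)) := by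
        intro θ hθ
        have hmem := hb ⟨k, hk, θ, hθ, rfl⟩
        rw [hval k θ, hk_def] at hmem
        have heq := hjb_g_eq γ hγ hγ0 hl
        linarith
      have hsup : r_ce ≤ (b - (1/γ - 1) * l ^ (γ/(γ-1))) / (a * w ^ γ) := by
        rw [hr]
        apply csSup_le (hne.image _)
        rintro x ⟨θ, hθ, rfl⟩
        rw [le_div_iff₀ hP]
        have := hbθ θ hθ
        linarith [this]
      have h6 := mul_le_mul_of_nonneg_left hsup hP.le
      rw [mul_div_cancel₀ _ hP.ne'] at h6
      rw [hT_def]; linarith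
  obtain ⟨θ₀, hθ₀⟩ := hne
  rw [hlub.csSup_eq ⟨_, ⟨1, one_pos, θ₀, hθ₀, rfl⟩⟩]; exact hM
end

section
/- Let γ < 1 with γ ≠ 0, let μ ∈ ℝⁿ, let Σ be an n×n symmetric positive semidefinite real matrix, and let Θ ⊆ ℝⁿ be nonempty with the Markowitz objective f(θ) = μᵀθ + ((γ−1)/2)·θᵀΣθ bounded above on Θ, with supremum r_ce. Let a : ℝ → ℝ be differentiable with a(t) > 0 for all t, and suppose a satisfies the ordinary differential equation −a′(t) = (1−γ)·a(t)^{γ/(γ−1)} + γ·r_ce·a(t). Then the candidate value function V(t, w) = a(t)·w^γ/γ satisfies the Hamilton–Jacobi–Bellman equation: for every t and every w > 0, −∂V/∂t (t, w) = −a′(t)·w^γ/γ equals the supremum over all c > 0 and θ ∈ Θ of c^γ/γ + a(t)·w^{γ−1}·(μᵀθ·w − c) + (1/2)·a(t)·(γ−1)·w^{γ−2}·(θᵀΣθ)·w². -/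
open Matrix

private lemma hjb_aux_u (γ u : ℝ) (hγ : γ < 1) (hγ0 : γ ≠ 0) (hu : 0 < u) :
    u ^ γ / γ - u ≤ (1 - γ) / γ := by
  rcases lt_or_gt_of_ne hγ0 with hneg | hpos
  · -- γ < 0 : u^γ ≥ γ u + (1-γ)
    have key : γ * u + (1 - γ) ≤ u ^ γ := by
      have h1 : Real.log u ≤ u - 1 := Real.log_le_sub_one_of_pos hu
      have h2 : γ * (u - 1) ≤ γ * Real.log u := by
        apply mul_le_mul_of_nonpos_left h1 hneg.le
      have h3 : 1 + γ * Real.log u ≤ Real.exp (γ * Real.log u) := by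
        linarith [Real.add_one_le_exp (γ * Real.log u)]
      rw [Real.rpow_def_of_pos hu]
      have h3' := Real.add_one_le_exp (Real.log u * γ)
      nlinarith [h2, h3']
    have e : (-((γ * u + (1 - γ)) - u ^ γ)) / (-γ) = u + (1 - γ) / γ - u ^ γ / γ := by
      rw [neg_div_neg_eq]
      field_simp
    have h4 : 0 ≤ (-((γ * u + (1 - γ)) - u ^ γ)) / (-γ) :=
      div_nonneg (by linarith) (by linarith)
    linarith [e ▸ h4]
  · -- 0 < γ < 1 : u^γ ≤ γ u + (1-γ)
    have key : u ^ γ ≤ γ * u + (1 - γ) := by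
      have hs : (-1 : ℝ) ≤ u - 1 := by linarith
      have := rpow_one_add_le_one_add_mul_self hs hpos.le hγ.le
      have e : (1 : ℝ) + (u - 1) = u := by ring
      rw [e] at this
      linarith
    have e : ((γ * u + (1 - γ)) - u ^ γ) / γ = u + (1 - γ) / γ - u ^ γ / γ := by
      field_simp
    have h4 : 0 ≤ ((γ * u + (1 - γ)) - u ^ γ) / γ :=
      div_nonneg (by linarith) hpos.le
    linarith [e ▸ h4]

private lemma hjb_young (γ : ℝ) (hγ : γ < 1) (hγ0 : γ ≠ 0) {k c : ℝ} (hk : 0 < k) (hc : 0 < c) :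
    c ^ γ / γ - k * c ≤ (1 - γ) / γ * k ^ (γ / (γ - 1)) := by
  have hγ1 : γ - 1 ≠ 0 := by intro h; apply absurd (by linarith : γ = 1) hγ.ne
  set c0 : ℝ := k ^ ((1 : ℝ) / (γ - 1)) with hc0
  have hc0pos : 0 < c0 := Real.rpow_pos_of_pos hk _
  set u : ℝ := c / c0 with hu
  have hupos : 0 < u := div_pos hc hc0pos
  have hcu : c = u * c0 := by rw [hu, div_mul_cancel₀ c hc0pos.ne']
  have hK : c0 ^ γ = k ^ (γ / (γ - 1)) := by
    rw [hc0, ← Real.rpow_mul hk.le]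
    congr 1; field_simp
  have hkc0 : k * c0 = k ^ (γ / (γ - 1)) := by
    rw [hc0]
    nth_rewrite 1 [← Real.rpow_one k]
    rw [← Real.rpow_add hk]
    congr 1; field_simp; ring
  have hcγ : c ^ γ = u ^ γ * k ^ (γ / (γ - 1)) := by
    rw [hcu, Real.mul_rpow hupos.le hc0pos.le, hK]
  have hKpos : 0 < k ^ (γ / (γ - 1)) := Real.rpow_pos_of_pos hk _
  have := hjb_aux_u γ u hγ hγ0 hupos
  have h2 : (u ^ γ / γ - u) * k ^ (γ / (γ - 1)) ≤ (1 - γ) / γ * k ^ (γ / (γ - 1)) :=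
    mul_le_mul_of_nonneg_right this hKpos.le
  calc c ^ γ / γ - k * c = (u ^ γ / γ - u) * k ^ (γ / (γ - 1)) := by
        rw [hcγ, hcu, ← hkc0]; ring
    _ ≤ (1 - γ) / γ * k ^ (γ / (γ - 1)) := h2

private lemma hjb_young_eq (γ : ℝ) (hγ : γ < 1) (hγ0 : γ ≠ 0) {k : ℝ} (hk : 0 < k) :
    (k ^ ((1 : ℝ) / (γ - 1))) ^ γ / γ - k * k ^ ((1 : ℝ) / (γ - 1))
      = (1 - γ) / γ * k ^ (γ / (γ - 1)) := by
  have hγ1 : γ - 1 ≠ 0 := by intro h; apply absurd (by linarith : γ = 1) hγ.ne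
  have hK : (k ^ ((1 : ℝ) / (γ - 1))) ^ γ = k ^ (γ / (γ - 1)) := by
    rw [← Real.rpow_mul hk.le]
    congr 1; field_simp
  have hkc0 : k * k ^ ((1 : ℝ) / (γ - 1)) = k ^ (γ / (γ - 1)) := by
    nth_rewrite 1 [← Real.rpow_one k]
    rw [← Real.rpow_add hk]
    congr 1; field_simp; ring
  rw [hK, hkc0]
  field_simp

/-- If the positive differentiable coefficient `a` satisfies the ODE
`-a′(t) = (1-γ)·a(t)^(γ/(γ-1)) + γ·r_ce·a(t)`, then the candidate value function
`V(t,w) = a(t)·w^γ/γ` satisfies the HJB equation: `-∂V/∂t(t,w) = -a′(t)·w^γ/γ` equals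
the supremum over `c > 0`, `θ ∈ Θ` of
`c^γ/γ + a(t)·w^(γ-1)·(μᵀθ·w - c) + (1/2)·a(t)·(γ-1)·w^(γ-2)·(θᵀΣθ)·w²`. -/
theorem candidate_value_function_satisfies_hjb
    (n : ℕ) (γ : ℝ) (hγ : γ < 1) (hγ0 : γ ≠ 0)
    (μ : Fin n → ℝ) (S : Matrix (Fin n) (Fin n) ℝ)
    (hsymm : S.IsSymm) (hpsd : S.PosSemidef)
    (Θ : Set (Fin n → ℝ)) (hne : Θ.Nonempty)
    (hbdd : BddAbove ((fun θ => μ ⬝ᵥ θ + (γ - 1) / 2 * (θ ⬝ᵥ (S *ᵥ θ))) '' Θ))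
    (r_ce : ℝ)
    (hr : r_ce = sSup ((fun θ => μ ⬝ᵥ θ + (γ - 1) / 2 * (θ ⬝ᵥ (S *ᵥ θ))) '' Θ))
    (a : ℝ → ℝ) (hdiff : Differentiable ℝ a) (hpos : ∀ t, 0 < a t)
    (hode : ∀ t, -deriv a t = (1 - γ) * a t ^ (γ / (γ - 1)) + γ * r_ce * a t) :
    ∀ t : ℝ, ∀ w > (0 : ℝ),
      -deriv a t * w ^ γ / γ =
        sSup {v : ℝ | ∃ c > (0 : ℝ), ∃ θ ∈ Θ,
          v = c ^ γ / γ + a t * w ^ (γ - 1) * ((μ ⬝ᵥ θ) * w - c)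
              + 1 / 2 * a t * (γ - 1) * w ^ (γ - 2) * (θ ⬝ᵥ (S *ᵥ θ)) * w ^ 2} := by
  intro t w hw
  set f : (Fin n → ℝ) → ℝ := fun θ => μ ⬝ᵥ θ + (γ - 1) / 2 * (θ ⬝ᵥ (S *ᵥ θ)) with hf
  have hat : 0 < a t := hpos t
  set k : ℝ := a t * w ^ (γ - 1) with hk
  have hkpos : 0 < k := mul_pos hat (Real.rpow_pos_of_pos hw _)
  set A : ℝ := a t * w ^ γ with hA
  have hApos : 0 < A := mul_pos hat (Real.rpow_pos_of_pos hw _)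
  set K : ℝ := k ^ (γ / (γ - 1)) with hK
  have hγ1 : γ - 1 ≠ 0 := by intro h; apply absurd (by linarith : γ = 1) hγ.ne
  -- basic rpow facts
  have hw1 : w ^ (γ - 1) * w = w ^ γ := by
    nth_rewrite 2 [← Real.rpow_one w]
    rw [← Real.rpow_add hw]; ring_nf
  have hw2 : w ^ (γ - 2) * w ^ (2 : ℕ) = w ^ γ := by
    rw [← Real.rpow_natCast w 2, ← Real.rpow_add hw]
    norm_num
  -- each element of the set in canonical form
  have helt : ∀ c > (0:ℝ), ∀ θ,
      c ^ γ / γ + a t * w ^ (γ - 1) * ((μ ⬝ᵥ θ) * w - c)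
        + 1 / 2 * a t * (γ - 1) * w ^ (γ - 2) * (θ ⬝ᵥ (S *ᵥ θ)) * w ^ 2
      = (c ^ γ / γ - k * c) + A * f θ := by
    intro c hc θ
    rw [hf, hk, hA]
    have e1 : a t * w ^ (γ - 1) * ((μ ⬝ᵥ θ) * w - c)
        = a t * (w ^ (γ - 1) * w) * (μ ⬝ᵥ θ) - a t * w ^ (γ - 1) * c := by ring
    have e2 : 1 / 2 * a t * (γ - 1) * w ^ (γ - 2) * (θ ⬝ᵥ (S *ᵥ θ)) * w ^ 2
        = a t * (w ^ (γ - 2) * w ^ (2:ℕ)) * ((γ - 1) / 2 * (θ ⬝ᵥ (S *ᵥ θ))) := by ring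
    rw [e1, e2, hw1, hw2]
    ring
  -- the value of K in terms of a t and w
  have hKval : K = a t ^ (γ / (γ - 1)) * w ^ γ := by
    rw [hK, hk, Real.mul_rpow hat.le (Real.rpow_pos_of_pos hw _).le,
      ← Real.rpow_mul hw.le]
    congr 2
    field_simp
  -- the target value
  have hT : -deriv a t * w ^ γ / γ = (1 - γ) / γ * K + A * r_ce := by
    rw [hode t, hKval, hA]
    field_simp
  rw [hT]
  symm
  apply csSup_eq_of_forall_le_of_forall_lt_exists_gt
  · obtain ⟨θ0, hθ0⟩ := hne
    exact ⟨_, 1, one_pos, θ0, hθ0, rfl⟩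
  · rintro v ⟨c, hc, θ, hθ, rfl⟩
    rw [helt c hc θ]
    have h1 : c ^ γ / γ - k * c ≤ (1 - γ) / γ * K := hjb_young γ hγ hγ0 hkpos hc
    have h2 : f θ ≤ r_ce := by
      rw [hr]
      exact le_csSup hbdd ⟨θ, hθ, rfl⟩
    have h3 : A * f θ ≤ A * r_ce := mul_le_mul_of_nonneg_left h2 hApos.le
    exact add_le_add h1 h3
  · intro x hx
    obtain ⟨θ0, hθ0⟩ := hne
    have himne : ((fun θ => μ ⬝ᵥ θ + (γ - 1) / 2 * (θ ⬝ᵥ (S *ᵥ θ))) '' Θ).Nonempty :=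
      ⟨f θ0, θ0, hθ0, rfl⟩
    have hε : 0 < ((1 - γ) / γ * K + A * r_ce - x) / A := div_pos (by linarith) hApos
    have hlt : r_ce - ((1 - γ) / γ * K + A * r_ce - x) / A
        < sSup ((fun θ => μ ⬝ᵥ θ + (γ - 1) / 2 * (θ ⬝ᵥ (S *ᵥ θ))) '' Θ) := by
      rw [← hr]; linarith
    obtain ⟨y, ⟨θ, hθ, rfl⟩, hy⟩ := exists_lt_of_lt_csSup himne hlt
    set c0 : ℝ := k ^ ((1 : ℝ) / (γ - 1)) with hc0
    have hc0pos : 0 < c0 := Real.rpow_pos_of_pos hkpos _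
    refine ⟨_, ⟨c0, hc0pos, θ, hθ, rfl⟩, ?_⟩
    rw [helt c0 hc0pos θ]
    have heq : c0 ^ γ / γ - k * c0 = (1 - γ) / γ * K := hjb_young_eq γ hγ hγ0 hkpos
    have h5 : A * (r_ce - ((1 - γ) / γ * K + A * r_ce - x) / A) < A * f θ :=
      mul_lt_mul_of_pos_left hy hApos
    have h6 : A * (((1 - γ) / γ * K + A * r_ce - x) / A)
        = (1 - γ) / γ * K + A * r_ce - x := by
      rw [mul_comm, div_mul_cancel₀ _ hApos.ne']
    have : A * r_ce - ((1 - γ) / γ * K + A * r_ce - x) < A * f θ := by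
      rw [mul_sub, h6] at h5; linarith
    rw [heq]
    linarith
end

section
/- Let γ < 1 with γ ≠ 0, let r ≠ 0 be real, let β > 0, let T ∈ ℝ, and set k = γ·r/(1−γ). Define b(t) = −1/k + (β^{1/(1−γ)} + 1/k)·exp(k·(T − t)), and assume b(t) > 0 for all t ∈ [0, T]. Then the function a(t) = b(t)^{1−γ} is differentiable on [0, T], satisfies the terminal condition a(T) = β, and satisfies the ordinary differential equation −a′(t) = (1−γ)·a(t)^{γ/(γ−1)} + γ·r·a(t) for all t ∈ [0, T]. -/
/-- With `k = γ·r/(1-γ)` and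
`b(t) = -1/k + (β^(1/(1-γ)) + 1/k)·exp(k·(T-t))` positive on `[0, T]`, the function
`a(t) = b(t)^(1-γ)` is differentiable on `[0, T]`, satisfies `a(T) = β`, and solves
`-a′(t) = (1-γ)·a(t)^(γ/(γ-1)) + γ·r·a(t)` on `[0, T]`. -/
theorem merton_value_coefficient_solves_ode (γ r β T : ℝ)
    (hγ : γ < 1) (hγ0 : γ ≠ 0) (hr : r ≠ 0) (hβ : 0 < β)
    (k : ℝ) (hk : k = γ * r / (1 - γ))
    (b : ℝ → ℝ)
    (hb : ∀ t, b t = -1 / k + (β ^ (1 / (1 - γ)) + 1 / k) * Real.exp (k * (T - t)))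
    (hbpos : ∀ t ∈ Set.Icc (0 : ℝ) T, 0 < b t)
    (a : ℝ → ℝ) (ha : ∀ t, a t = b t ^ (1 - γ)) :
    (∀ t ∈ Set.Icc (0 : ℝ) T, DifferentiableAt ℝ a t) ∧
    a T = β ∧
    ∀ t ∈ Set.Icc (0 : ℝ) T,
      -deriv a t = (1 - γ) * a t ^ (γ / (γ - 1)) + γ * r * a t := by
  have h1γ : (0:ℝ) < 1 - γ := by linarith
  have h1γ' : (1:ℝ) - γ ≠ 0 := ne_of_gt h1γ
  have hk0 : k ≠ 0 := by
    rw [hk]; exact div_ne_zero (mul_ne_zero hγ0 hr) h1γ'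
  have hbfun : b = fun t => -1 / k + (β ^ (1 / (1 - γ)) + 1 / k) * Real.exp (k * (T - t)) :=
    funext hb
  have hafun : a = fun t => b t ^ (1 - γ) := funext ha
  -- derivative of b
  have hderivb : ∀ t : ℝ, HasDerivAt b (-(k * b t) - 1) t := by
    intro t
    have h1 : HasDerivAt (fun s : ℝ => k * (T - s)) (k * -1) t :=
      ((hasDerivAt_id t).const_sub T).const_mul k
    have h2 := h1.exp
    have h3 := (h2.const_mul (β ^ (1 / (1 - γ)) + 1 / k)).const_add (-1 / k)
    rw [← hbfun] at h3
    refine h3.congr_deriv ?_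
    rw [hb t]
    field_simp
    ring
  -- derivative of a on the interval
  have hderiva : ∀ t ∈ Set.Icc (0 : ℝ) T,
      HasDerivAt a ((-(k * b t) - 1) * (1 - γ) * b t ^ ((1 - γ) - 1)) t := by
    intro t ht
    have hb0 := hbpos t ht
    have := (hderivb t).rpow_const (p := 1 - γ) (Or.inl (ne_of_gt hb0))
    rwa [← hafun] at this
  refine ⟨fun t ht => (hderiva t ht).differentiableAt, ?_, ?_⟩
  · -- terminal condition
    rw [ha T, hb T, sub_self, mul_zero, Real.exp_zero, mul_one]
    have : -1 / k + (β ^ (1 / (1 - γ)) + 1 / k) = β ^ (1 / (1 - γ)) := by ring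
    rw [this, ← Real.rpow_mul (le_of_lt hβ), one_div, inv_mul_cancel₀ h1γ', Real.rpow_one]
  · intro t ht
    have hb0 := hbpos t ht
    rw [(hderiva t ht).deriv, ha t]
    have hpow : (b t ^ (1 - γ)) ^ (γ / (γ - 1)) = b t ^ (-γ) := by
      rw [← Real.rpow_mul (le_of_lt hb0)]
      congr 1
      have hγ1 : γ - 1 ≠ 0 := by intro h; apply h1γ'; linarith
      field_simp
      ring
    have hpow2 : b t ^ ((1 - γ) - 1) = b t ^ (-γ) := by norm_num
    have hpow3 : b t ^ (-γ) * b t = b t ^ (1 - γ) := by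
      nth_rewrite 2 [← Real.rpow_one (b t)]
      rw [← Real.rpow_add hb0]
      congr 1
      ring
    have hkγ : (1 - γ) * k = γ * r := by
      rw [hk]; field_simp
    rw [hpow, hpow2]
    calc -((-(k * b t) - 1) * (1 - γ) * b t ^ (-γ))
        = (1 - γ) * b t ^ (-γ) + ((1 - γ) * k) * (b t ^ (-γ) * b t) := by ring
      _ = (1 - γ) * b t ^ (-γ) + γ * r * b t ^ (1 - γ) := by rw [hkγ, hpow3]
end

section
/- Let γ < 1, let μ ∈ ℝⁿ, let Σ be an n×n symmetric positive semidefinite real matrix, let Θ ⊆ ℝⁿ be convex, let h > 0, let w_init > 0, and let K be a positive integer. Then the feasible set of the discretized certainty equivalent Merton problem, namely the set of triples (x, w, c) with x ∈ (ℝⁿ)^{K+1}, w ∈ ℝ^{K+1}, c ∈ ℝ^{K} satisfying: w_k > 0 for all k = 0,…,K; the discretized dynamics inequality (w_{k+1} − w_k)/h ≤ μᵀx_k − c_k + ((γ−1)/2)·(x_kᵀΣx_k)/w_k for k = 0,…,K−1; the allocation constraint (1/w_k)·x_k ∈ Θ for k = 0,…,K; and w_0 = w_init, is a convex subset of (ℝⁿ)^{K+1}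 × ℝ^{K+1} × ℝ^{K}. -/
open Matrix

private lemma merton_comb_pos (a b w1 w2 : ℝ) (ha : 0 ≤ a) (hb : 0 ≤ b)
    (hab : a + b = 1) (h1 : 0 < w1) (h2 : 0 < w2) : 0 < a * w1 + b * w2 := by
  rcases eq_or_lt_of_le ha with h|h
  · have hb1 : b = 1 := by linarith [hab, h]
    simp [← h, hb1, h2]
  · nlinarith [mul_nonneg hb h2.le]

private lemma merton_aux_qol (q1 q2 B w1 w2 a b : ℝ) (hw1 : 0 < w1) (hw2 : 0 < w2)
    (ha : 0 ≤ a) (hb : 0 ≤ b) (hab : a + b = 1)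
    (key : 0 ≤ w2^2*q1 - 2*(w1*w2)*B + w1^2*q2) :
    (a^2*q1 + 2*(a*b)*B + b^2*q2) / (a*w1 + b*w2) ≤ a*(q1/w1) + b*(q2/w2) := by
  have hw : 0 < a*w1 + b*w2 := merton_comb_pos a b w1 w2 ha hb hab hw1 hw2
  rw [div_le_iff₀ hw]
  have h1 : a*(q1/w1) + b*(q2/w2) = (a*q1*w2 + b*q2*w1)/(w1*w2) := by
    field_simp
  rw [h1, div_mul_eq_mul_div, le_div_iff₀ (by positivity)]
  nlinarith [mul_nonneg (mul_nonneg ha hb) key]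

private lemma merton_expand (n : ℕ) (S : Matrix (Fin n) (Fin n) ℝ) (hsymm : S.IsSymm)
    (x y : Fin n → ℝ) (a b : ℝ) :
    (a•x+b•y) ⬝ᵥ S *ᵥ (a•x+b•y) =
      a^2*(x ⬝ᵥ S *ᵥ x) + 2*(a*b)*(x ⬝ᵥ S *ᵥ y) + b^2*(y ⬝ᵥ S *ᵥ y) := by
  have hsym : y ⬝ᵥ S *ᵥ x = x ⬝ᵥ S *ᵥ y := by
    rw [dotProduct_mulVec, ← mulVec_transpose, hsymm.eq, dotProduct_comm]
  simp [mulVec_add, mulVec_smul, dotProduct_add, add_dotProduct, smul_dotProduct,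
    dotProduct_smul, hsym, smul_eq_mul]
  ring

private lemma merton_qol (n : ℕ) (S : Matrix (Fin n) (Fin n) ℝ) (hsymm : S.IsSymm)
    (hpsd : S.PosSemidef) (x y : Fin n → ℝ) (w1 w2 a b : ℝ)
    (hw1 : 0 < w1) (hw2 : 0 < w2) (ha : 0 ≤ a) (hb : 0 ≤ b) (hab : a + b = 1) :
    ((a•x+b•y) ⬝ᵥ S *ᵥ (a•x+b•y)) / (a*w1+b*w2) ≤
      a*((x ⬝ᵥ S *ᵥ x)/w1) + b*((y ⬝ᵥ S *ᵥ y)/w2) := by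
  rw [merton_expand n S hsymm]
  apply merton_aux_qol _ _ _ _ _ _ _ hw1 hw2 ha hb hab
  have h0 : (0:ℝ) ≤ (w2•x+(-w1)•y) ⬝ᵥ S *ᵥ (w2•x+(-w1)•y) := by
    have := hpsd.dotProduct_mulVec_nonneg (w2•x+(-w1)•y); simpa using this
  rw [merton_expand n S hsymm] at h0
  nlinarith [h0]

/-- The feasible set of the discretized certainty equivalent Merton
problem — triples `(x, w, c)` with `w_k > 0`, the discretized dynamics inequality
`(w_{k+1} - w_k)/h ≤ μᵀx_k - c_k + ((γ-1)/2)·(x_kᵀΣx_k)/w_k`, the allocation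
constraint `(1/w_k)·x_k ∈ Θ`, and `w_0 = w_init` — is convex. -/
theorem discretized_feasible_set_convex (n K : ℕ) (hK : 0 < K)
    (γ h w_init : ℝ) (hγ : γ < 1) (hh : 0 < h) (hwi : 0 < w_init)
    (μ : Fin n → ℝ) (S : Matrix (Fin n) (Fin n) ℝ)
    (hsymm : S.IsSymm) (hpsd : S.PosSemidef)
    (Θ : Set (Fin n → ℝ)) (hΘ : Convex ℝ Θ) :
    Convex ℝ
      {p : (Fin (K + 1) → Fin n → ℝ) × (Fin (K + 1) → ℝ) × (Fin K → ℝ) |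
        (∀ k, 0 < p.2.1 k) ∧
        (∀ k : Fin K,
          (p.2.1 k.succ - p.2.1 k.castSucc) / h ≤
            μ ⬝ᵥ p.1 k.castSucc - p.2.2 k +
              (γ - 1) / 2 * (p.1 k.castSucc ⬝ᵥ (S *ᵥ p.1 k.castSucc)) /
                p.2.1 k.castSucc) ∧
        (∀ k : Fin (K + 1), (1 / p.2.1 k) • p.1 k ∈ Θ) ∧
        p.2.1 0 = w_init} := by
  intro p hp q hq a b ha hb hab
  obtain ⟨hpw, hpd, hpΘ, hp0⟩ := hp
  obtain ⟨hqw, hqd, hqΘ, hq0⟩ := hq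
  have hwpos : ∀ k : Fin (K+1), 0 < a * p.2.1 k + b * q.2.1 k := fun k =>
    merton_comb_pos a b _ _ ha hb hab (hpw k) (hqw k)
  refine ⟨?_, ?_, ?_, ?_⟩
  · intro k
    simpa using hwpos k
  · intro k
    set x1 := p.1 k.castSucc with hx1
    set x2 := q.1 k.castSucc with hx2
    set w1 := p.2.1 k.castSucc with hw1
    set w2 := q.2.1 k.castSucc with hw2
    have hquad := merton_qol n S hsymm hpsd x1 x2 w1 w2 a b (hpw _) (hqw _) ha hb hab
    have ht : (γ - 1) / 2 ≤ 0 := by linarith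
    have hquad2 : a * ((γ-1)/2 * (x1 ⬝ᵥ S *ᵥ x1) / w1)
        + b * ((γ-1)/2 * (x2 ⬝ᵥ S *ᵥ x2) / w2) ≤
        (γ-1)/2 * ((a•x1+b•x2) ⬝ᵥ S *ᵥ (a•x1+b•x2)) / (a*w1+b*w2) := by
      have := mul_le_mul_of_nonpos_left hquad ht
      calc a * ((γ-1)/2 * (x1 ⬝ᵥ S *ᵥ x1) / w1) + b * ((γ-1)/2 * (x2 ⬝ᵥ S *ᵥ x2) / w2)
          = (γ-1)/2 * (a*((x1 ⬝ᵥ S *ᵥ x1)/w1) + b*((x2 ⬝ᵥ S *ᵥ x2)/w2)) := by ring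
        _ ≤ (γ-1)/2 * (((a•x1+b•x2) ⬝ᵥ S *ᵥ (a•x1+b•x2)) / (a*w1+b*w2)) := this
        _ = (γ-1)/2 * ((a•x1+b•x2) ⬝ᵥ S *ᵥ (a•x1+b•x2)) / (a*w1+b*w2) := by ring
    have h1 := hpd k
    have h2 := hqd k
    have hcomb : a * ((p.2.1 k.succ - w1)/h) + b * ((q.2.1 k.succ - w2)/h) ≤
        a * (μ ⬝ᵥ x1 - p.2.2 k + (γ-1)/2 * (x1 ⬝ᵥ S *ᵥ x1) / w1)
        + b * (μ ⬝ᵥ x2 - q.2.2 k + (γ-1)/2 * (x2 ⬝ᵥ S *ᵥ x2) / w2) :=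
      add_le_add (mul_le_mul_of_nonneg_left h1 ha) (mul_le_mul_of_nonneg_left h2 hb)
    simp only [Set.mem_setOf_eq, Prod.fst_add, Prod.snd_add, Prod.smul_fst, Prod.smul_snd,
      Pi.add_apply, Pi.smul_apply, smul_eq_mul]
    have hdot : μ ⬝ᵥ (a • x1 + b • x2) = a * (μ ⬝ᵥ x1) + b * (μ ⬝ᵥ x2) := by
      simp [dotProduct_add, dotProduct_smul, smul_eq_mul]
    calc (a * p.2.1 k.succ + b * q.2.1 k.succ - (a * w1 + b * w2)) / h
        = a * ((p.2.1 k.succ - w1)/h) + b * ((q.2.1 k.succ - w2)/h) := by ring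
      _ ≤ a * (μ ⬝ᵥ x1 - p.2.2 k + (γ-1)/2 * (x1 ⬝ᵥ S *ᵥ x1) / w1)
          + b * (μ ⬝ᵥ x2 - q.2.2 k + (γ-1)/2 * (x2 ⬝ᵥ S *ᵥ x2) / w2) := hcomb
      _ = (a * (μ ⬝ᵥ x1) + b * (μ ⬝ᵥ x2)) - (a * p.2.2 k + b * q.2.2 k)
          + (a * ((γ-1)/2 * (x1 ⬝ᵥ S *ᵥ x1) / w1)
             + b * ((γ-1)/2 * (x2 ⬝ᵥ S *ᵥ x2) / w2)) := by ring
      _ ≤ (a * (μ ⬝ᵥ x1) + b * (μ ⬝ᵥ x2)) - (a * p.2.2 k + b * q.2.2 k)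
          + (γ-1)/2 * ((a•x1+b•x2) ⬝ᵥ S *ᵥ (a•x1+b•x2)) / (a*w1+b*w2) := by
            linarith [hquad2]
      _ = μ ⬝ᵥ (a • x1 + b • x2) - (a * p.2.2 k + b * q.2.2 k)
          + (γ-1)/2 * ((a•x1+b•x2) ⬝ᵥ S *ᵥ (a•x1+b•x2)) / (a*w1+b*w2) := by
            rw [hdot]
  · intro k
    set x1 := p.1 k with hx1
    set x2 := q.1 k with hx2
    set w1 := p.2.1 k with hw1
    set w2 := q.2.1 k with hw2
    have hw : 0 < a*w1 + b*w2 := hwpos k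
    have heq : (1 / ((a • p + b • q).2.1 k)) • ((a • p + b • q).1 k)
        = (a*w1/(a*w1+b*w2)) • ((1/w1) • x1) + (b*w2/(a*w1+b*w2)) • ((1/w2) • x2) := by
      simp only [Prod.fst_add, Prod.snd_add, Prod.smul_fst, Prod.smul_snd,
        Pi.add_apply, Pi.smul_apply, smul_eq_mul]
      funext i
      simp only [Pi.add_apply, Pi.smul_apply, smul_eq_mul]
      simp only [← hw1, ← hw2, ← hx1, ← hx2]
      have hw1ne : w1 ≠ 0 := (hpw k).ne'
      have hw2ne : w2 ≠ 0 := (hqw k).ne'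
      field_simp [hw1ne, hw2ne, hw.ne']
    refine Set.mem_of_eq_of_mem heq ?_
    exact hΘ (hpΘ k) (hqΘ k)
      (div_nonneg (mul_nonneg ha (hpw k).le) hw.le)
      (div_nonneg (mul_nonneg hb (hqw k).le) hw.le)
      (by field_simp [hw.ne'])
  · show (a • p + b • q).2.1 0 = w_init
    simp only [Prod.fst_add, Prod.snd_add, Prod.smul_fst, Prod.smul_snd,
      Pi.add_apply, Pi.smul_apply, smul_eq_mul, hp0, hq0]
    rw [← add_mul, hab, one_mul]
end
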